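/- Let t = 1 − n(b−c)/((n−1)·b) ∈ (0,1). There exists δ₀ ∈ (0,1) such that for all δ ∈ (δ₀,1): for every k ∈ {1,…,n−1} the set B_k(δ) = {ε ∈ (0,1) : Δ(ε;k,δ) > t} is a nonempty open interval (ε̲_k, ε̄_k), and the endpoints satisfy 0 = ε̲_{n−1} < ε̲_{n−2} < ⋯ < ε̲_1 and 0 < ε̄_{n−1} < ε̄_{n−2} < ⋯ < ε̄_1 < 1. That is, both endpoints of the band of mistake rates supporting the stability of the conditional cooperative strategy T_k strictly increase as its tolerance increases (as k decreases), and the lower endpoint is 0 only for the least tolerant strategy T_{n−1}. -/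

import Mathlib

open Finset

/-- `ψ(j,q,ε) = (j choose q)·ε^q·(1−ε)^(j−q)`. -/
noncomputable def psi (j q : ℕ) (ε : ℝ) : ℝ :=
  (j.choose q : ℝ) * ε ^ q * (1 - ε) ^ (j - q)

/-- The continuation factor `Δ(ε;k,δ)`. -/
noncomputable def Delta (n k : ℕ) (ε δ : ℝ) : ℝ :=
  δ * (1 - ε) * psi (n - 1) (n - k - 1) ε /
    (1 - δ * ∑ q ∈ range (n - k - 1), psi (n - 1) q ε)

noncomputable def Snum (N m : ℕ) (ε : ℝ) : ℝ := ∑ q ∈ range m, psi N q ε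
noncomputable def Tt (N m : ℕ) (ε : ℝ) : ℝ := ∑ q ∈ Icc m N, psi N q ε
noncomputable def NumF (N m : ℕ) (ε : ℝ) : ℝ :=
  (N.choose m : ℝ) * ε ^ m * (1 - ε) ^ (N + 1 - m)
noncomputable def Vf (N m : ℕ) (δ ε : ℝ) : ℝ :=
  (1 - δ * Snum N m ε) / (δ * NumF N m ε)

lemma psi_nonneg {N q : ℕ} {ε : ℝ} (h0 : 0 ≤ ε) (h1 : ε ≤ 1) : 0 ≤ psi N q ε := by
  unfold psi
  have : (0:ℝ) ≤ 1 - ε := by linarith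
  positivity

lemma sum_psi (N : ℕ) (ε : ℝ) : ∑ q ∈ range (N + 1), psi N q ε = 1 := by
  have h : ((ε + (1 - ε)) ^ N : ℝ) = ∑ q ∈ range (N + 1), ε ^ q * (1 - ε) ^ (N - q) * N.choose q :=
    add_pow ε (1 - ε) N
  have h2 : ((ε + (1 - ε)) ^ N : ℝ) = 1 := by norm_num
  rw [h2] at h
  rw [h]
  exact Finset.sum_congr rfl fun q _ => by unfold psi; ring

lemma Snum_add_Tt {N m : ℕ} (hm : m ≤ N) (ε : ℝ) : Snum N m ε + Tt N m ε = 1 := by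
  unfold Snum Tt
  rw [show Icc m N = Ico m (N + 1) by rw [Finset.Ico_add_one_right_eq_Icc], Finset.range_eq_Ico,
    Finset.sum_Ico_consecutive _ (Nat.zero_le m) (by omega)]
  rw [← Finset.range_eq_Ico]
  exact sum_psi N ε

lemma Tt_nonneg {N m : ℕ} {ε : ℝ} (h0 : 0 ≤ ε) (h1 : ε ≤ 1) : 0 ≤ Tt N m ε :=
  Finset.sum_nonneg fun q _ => psi_nonneg h0 h1

lemma Tt_zero {N m : ℕ} (h1 : 1 ≤ m) : Tt N m 0 = 0 := by
  unfold Tt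
  refine Finset.sum_eq_zero fun q hq => ?_
  have hq1 : 1 ≤ q := le_trans h1 (Finset.mem_Icc.mp hq).1
  unfold psi
  rw [zero_pow (by omega)]
  ring

lemma Tt_one {N m : ℕ} (hm : m ≤ N) : Tt N m 1 = 1 := by
  unfold Tt
  rw [Finset.sum_eq_single_of_mem N (Finset.mem_Icc.mpr ⟨hm, le_refl N⟩)]
  · unfold psi; simp
  · intro q hq hne
    have hqN : q < N := lt_of_le_of_ne (Finset.mem_Icc.mp hq).2 hne
    unfold psi
    rw [show (1:ℝ) - 1 = 0 by ring, zero_pow (by omega)]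
    ring

lemma choose_pos_real {N m : ℕ} (hm : m ≤ N) : (0:ℝ) < N.choose m := by
  exact_mod_cast Nat.choose_pos hm

lemma NumF_pos {N m : ℕ} {ε : ℝ} (hm : m ≤ N) (hε : ε ∈ Set.Ioo (0:ℝ) 1) :
    0 < NumF N m ε := by
  unfold NumF
  have h1 : (0:ℝ) < 1 - ε := by linarith [hε.2]
  have h0 : (0:ℝ) < ε := hε.1
  have := choose_pos_real hm
  positivity

lemma NumF_nonneg {N m : ℕ} {ε : ℝ} (h0 : 0 ≤ ε) (h1 : ε ≤ 1) : 0 ≤ NumF N m ε := by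
  unfold NumF
  have : (0:ℝ) ≤ 1 - ε := by linarith
  positivity

lemma one_sub_mul_psi {N m : ℕ} (hm : m ≤ N) (ε : ℝ) :
    (1 - ε) * psi N m ε = NumF N m ε := by
  unfold psi NumF
  rw [show N + 1 - m = (N - m) + 1 by omega, pow_succ]
  ring

lemma Tt_sub_succ {N m : ℕ} (hm : m ≤ N) (ε : ℝ) :
    Tt N m ε - Tt N (m + 1) ε = psi N m ε := by
  unfold Tt
  rw [show Icc (m+1) N = Ioc m N by rw [← Finset.Icc_add_one_left_eq_Ioc],
    Finset.Icc_eq_cons_Ioc hm, Finset.sum_cons]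
  ring

lemma hasDerivAt_psi {N q : ℕ} (hq1 : 1 ≤ q) (hqN : q ≤ N) (ε : ℝ) :
    HasDerivAt (fun e => psi N q e)
      ((N : ℝ) * (psi (N - 1) (q - 1) ε - psi (N - 1) q ε)) ε := by
  have h1e : HasDerivAt (fun e : ℝ => 1 - e) (-1) ε := (hasDerivAt_id ε).const_sub 1
  have hq : HasDerivAt (fun e : ℝ => (N.choose q : ℝ) * e ^ q)
      ((N.choose q : ℝ) * (q * ε ^ (q - 1))) ε := (hasDerivAt_pow q ε).const_mul _
  have hp : HasDerivAt (fun e : ℝ => (1 - e) ^ (N - q))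
      ((N - q : ℕ) * (1 - ε) ^ (N - q - 1) * (-1)) ε := h1e.pow (N - q)
  have hraw := hq.mul hp
  have hfun : (fun e => psi N q e) = fun e => ((N.choose q : ℝ) * e ^ q) * (1 - e) ^ (N - q) := by
    funext e; unfold psi; ring
  rw [hfun]
  refine hraw.congr_deriv (Eq.symm ?_)
  rcases eq_or_lt_of_le hqN with hEq | hlt
  · subst hEq
    have hz : (q - 1).choose q = 0 := Nat.choose_eq_zero_of_lt (by omega)
    unfold psi
    rw [hz, Nat.choose_self]
    simp [Nat.sub_self]
  · -- q < N
    have c1 : (N : ℝ) * ((N - 1).choose (q - 1)) = q * N.choose q := by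
      have h0 := Nat.add_one_mul_choose_eq (N - 1) (q - 1)
      rw [show N-1+1 = N by omega, show q-1+1 = q by omega] at h0
      exact_mod_cast h0.trans (Nat.mul_comm _ _)
    have c2 : (N : ℝ) * ((N - 1).choose q) = ((N : ℝ) - q) * N.choose q := by
      have h1 := Nat.add_one_mul_choose_eq (N - 1) q
      rw [show N-1+1 = N by omega] at h1
      have h2 := Nat.choose_succ_right_eq N q
      have h3 : N * ((N - 1).choose q) = N.choose q * (N - q) := by rw [h1]; exact h2
      have h4 := congrArg (Nat.cast : ℕ → ℝ) h3
      push_cast [Nat.cast_sub hqN] at h4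
      linarith
    unfold psi
    rw [show N - 1 - (q - 1) = N - q by omega, show N - 1 - q = N - q - 1 by omega]
    have hNq : (((N - q : ℕ)) : ℝ) = (N : ℝ) - q := by
      push_cast [Nat.cast_sub hqN]; ring
    rw [mul_sub]
    rw [show (N:ℝ) * ((N - 1).choose (q-1) * ε ^ (q-1) * (1-ε)^(N-q))
        = ((N:ℝ) * ((N - 1).choose (q-1))) * ε ^ (q-1) * (1-ε)^(N-q) by ring,
      show (N:ℝ) * ((N - 1).choose q * ε ^ q * (1-ε)^(N-q-1))
        = ((N:ℝ) * ((N - 1).choose q)) * ε ^ q * (1-ε)^(N-q-1) by ring, c1, c2, hNq]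
    ring

lemma hasDerivAt_Tt {N m : ℕ} (h1 : 1 ≤ m) (hm : m ≤ N) (ε : ℝ) :
    HasDerivAt (Tt N m) ((N : ℝ) * psi (N - 1) (m - 1) ε) ε := by
  have hsum : HasDerivAt (fun e => ∑ q ∈ Icc m N, psi N q e)
      (∑ q ∈ Icc m N, (N : ℝ) * (psi (N - 1) (q - 1) ε - psi (N - 1) q ε)) ε := by
    apply HasDerivAt.fun_sum
    intro q hq
    have := Finset.mem_Icc.mp hq
    exact hasDerivAt_psi (by omega) this.2 ε
  have heq : (∑ q ∈ Icc m N, (N : ℝ) * (psi (N - 1) (q - 1) ε - psi (N - 1) q ε))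
      = (N : ℝ) * psi (N - 1) (m - 1) ε := by
    rw [← Finset.mul_sum]
    congr 1
    rw [show Icc m N = Ico m (N + 1) by rw [Finset.Ico_add_one_right_eq_Icc],
      Finset.sum_Ico_eq_sum_range]
    have hre : ∀ i ∈ range (N + 1 - m),
        (psi (N-1) (m + i - 1) ε - psi (N-1) (m + i) ε)
        = ((fun j => psi (N-1) (m - 1 + j) ε) i - (fun j => psi (N-1) (m - 1 + j) ε) (i+1)) := by
      intro i _
      simp only
      rw [show m + i - 1 = m - 1 + i by omega, show m + i = m - 1 + (i + 1) by omega]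
    rw [Finset.sum_congr rfl hre, Finset.sum_range_sub']
    show psi (N-1) (m-1+0) ε - psi (N-1) (m-1+(N+1-m)) ε = psi (N-1) (m-1) ε
    rw [show m - 1 + 0 = m - 1 by omega, show m - 1 + (N + 1 - m) = N by omega]
    have : psi (N - 1) N ε = 0 := by
      unfold psi
      rw [Nat.choose_eq_zero_of_lt (by omega)]
      ring
    rw [this, sub_zero]
  rw [← heq]
  exact hsum

lemma hasDerivAt_NumF {N m : ℕ} (h1 : 1 ≤ m) (hm : m ≤ N) (ε : ℝ) :
    HasDerivAt (NumF N m)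
      ((N.choose m : ℝ) * (ε ^ (m - 1) * (1 - ε) ^ (N - m)) * ((m : ℝ) - ((N : ℝ) + 1) * ε)) ε := by
  have h1e : HasDerivAt (fun e : ℝ => 1 - e) (-1) ε := (hasDerivAt_id ε).const_sub 1
  have hq : HasDerivAt (fun e : ℝ => (N.choose m : ℝ) * e ^ m)
      ((N.choose m : ℝ) * (m * ε ^ (m - 1))) ε := (hasDerivAt_pow m ε).const_mul _
  have hp : HasDerivAt (fun e : ℝ => (1 - e) ^ (N + 1 - m))
      ((N + 1 - m : ℕ) * (1 - ε) ^ (N + 1 - m - 1) * (-1)) ε := h1e.pow (N + 1 - m)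
  have hraw := hq.mul hp
  have hfun : NumF N m = fun e => ((N.choose m : ℝ) * e ^ m) * (1 - e) ^ (N + 1 - m) := by
    funext e; unfold NumF; ring
  rw [hfun]
  refine hraw.congr_deriv (Eq.symm ?_)
  rw [show N + 1 - m - 1 = N - m by omega,
    show ((N + 1 - m : ℕ) : ℝ) = (N : ℝ) + 1 - m by push_cast [Nat.cast_sub (by omega : m ≤ N + 1)]; ring,
    show (1 - ε) ^ (N + 1 - m) = (1 - ε) ^ (N - m) * (1 - ε) by rw [← pow_succ]; congr 1; omega,
    show ε ^ m = ε ^ (m - 1) * ε by rw [← pow_succ]; congr 1; omega]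
  ring

noncomputable def Wf (N m : ℕ) (D ε : ℝ) : ℝ :=
  (N : ℝ) * ((N - 1).choose (m - 1)) * (ε ^ m * (1 - ε) ^ (N + 1 - m)) +
    (D + Tt N m ε) * (((N : ℝ) + 1) * ε - m)

lemma hasDerivAt_Wf {N m : ℕ} (h1 : 1 ≤ m) (hm : m ≤ N) (D ε : ℝ) :
    HasDerivAt (Wf N m D) (((N : ℝ) + 1) * (D + Tt N m ε)) ε := by
  have h1e : HasDerivAt (fun e : ℝ => 1 - e) (-1) ε := (hasDerivAt_id ε).const_sub 1
  have d1 : HasDerivAt (fun e : ℝ => e ^ m * (1 - e) ^ (N + 1 - m))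
      ((m * ε ^ (m - 1)) * (1 - ε) ^ (N + 1 - m)
        + ε ^ m * ((N + 1 - m : ℕ) * (1 - ε) ^ (N + 1 - m - 1) * (-1))) ε :=
    (hasDerivAt_pow m ε).mul (h1e.pow (N + 1 - m))
  have d2 : HasDerivAt (fun e : ℝ => D + Tt N m e) ((N : ℝ) * psi (N - 1) (m - 1) ε) ε :=
    (hasDerivAt_Tt h1 hm ε).const_add D
  have d3 : HasDerivAt (fun e : ℝ => ((N : ℝ) + 1) * e - m) ((N : ℝ) + 1) ε := by
    simpa using ((hasDerivAt_id ε).const_mul ((N : ℝ) + 1)).sub_const (m : ℝ)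
  have hraw := (d1.const_mul ((N : ℝ) * ((N - 1).choose (m - 1) : ℝ))).add (d2.mul d3)
  have hfun : Wf N m D = fun e => (N : ℝ) * ((N - 1).choose (m - 1)) * (e ^ m * (1 - e) ^ (N + 1 - m)) + (D + Tt N m e) * (((N : ℝ) + 1) * e - m) := rfl
  rw [hfun]
  refine hraw.congr_deriv (Eq.symm ?_)
  unfold psi
  rw [show N - 1 - (m - 1) = N - m by omega,
    show N + 1 - m - 1 = N - m by omega,
    show ((N + 1 - m : ℕ) : ℝ) = (N : ℝ) + 1 - m by push_cast [Nat.cast_sub (by omega : m ≤ N + 1)]; ring,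
    show (1 - ε) ^ (N + 1 - m) = (1 - ε) ^ (N - m) * (1 - ε) by rw [← pow_succ]; congr 1; omega,
    show ε ^ m = ε ^ (m - 1) * ε by rw [← pow_succ]; congr 1; omega]
  ring

lemma continuous_Snum (N m : ℕ) : Continuous (Snum N m) := by
  unfold Snum
  exact continuous_finset_sum _ fun q _ => by unfold psi; fun_prop

lemma continuous_NumF (N m : ℕ) : Continuous (NumF N m) := by
  unfold NumF; fun_prop

lemma contOn_Vf {N m : ℕ} {δ : ℝ} (hm : m ≤ N) (hδ : 0 < δ) :
    ContinuousOn (Vf N m δ) (Set.Ioo 0 1) := by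
  unfold Vf
  apply ContinuousOn.div
  · exact (continuous_const.sub (continuous_const.mul (continuous_Snum N m))).continuousOn
  · exact (continuous_const.mul (continuous_NumF N m)).continuousOn
  · intro x hx
    exact (mul_pos hδ (NumF_pos hm hx)).ne'

lemma Vf_eq {N m : ℕ} {δ : ℝ} (hm : m ≤ N) :
    Vf N m δ = fun ε => ((1 - δ) + δ * Tt N m ε) / (δ * NumF N m ε) := by
  funext ε
  unfold Vf
  have hS : Snum N m ε = 1 - Tt N m ε := by
    have := Snum_add_Tt hm ε; linarith
  rw [hS]; ring_nf

lemma hasDerivAt_Vf {N m : ℕ} {δ ε : ℝ} (h1 : 1 ≤ m) (hm : m ≤ N) (hδ : 0 < δ)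
    (hε : ε ∈ Set.Ioo (0:ℝ) 1) :
    HasDerivAt (Vf N m δ)
      ((N.choose m : ℝ) * (ε ^ (m - 1) * (1 - ε) ^ (N - m)) * Wf N m ((1 - δ)/δ) ε
        / (NumF N m ε) ^ 2) ε := by
  have hNum := NumF_pos hm hε
  have hne : δ * NumF N m ε ≠ 0 := (mul_pos hδ hNum).ne'
  have dT : HasDerivAt (fun e => (1 - δ) + δ * Tt N m e)
      (δ * ((N : ℝ) * psi (N - 1) (m - 1) ε)) ε :=
    ((hasDerivAt_Tt h1 hm ε).const_mul δ).const_add (1 - δ)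
  have dN : HasDerivAt (fun e => δ * NumF N m e)
      (δ * ((N.choose m : ℝ) * (ε ^ (m - 1) * (1 - ε) ^ (N - m)) * ((m : ℝ) - ((N : ℝ) + 1) * ε))) ε :=
    (hasDerivAt_NumF h1 hm ε).const_mul δ
  have hraw := dT.div dN hne
  rw [Vf_eq hm]
  refine hraw.congr_deriv (Eq.symm ?_)
  have eqpsi : psi (N-1) (m-1) ε = ((N-1).choose (m-1) : ℝ) * (ε^(m-1) * (1-ε)^(N-m)) := by
    unfold psi; rw [show N-1-(m-1) = N-m by omega]; ring
  have eqK : NumF N m ε = (N.choose m : ℝ) * (ε^(m-1) * (1-ε)^(N-m)) * (ε * (1-ε)) := by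
    unfold NumF
    rw [show (1 - ε) ^ (N + 1 - m) = (1 - ε) ^ (N - m) * (1 - ε) by rw [← pow_succ]; congr 1; omega,
      show ε ^ m = ε ^ (m - 1) * ε by rw [← pow_succ]; congr 1; omega]
    ring
  have eqW : Wf N m ((1-δ)/δ) ε
      = (N:ℝ) * ((N-1).choose (m-1)) * ((ε^(m-1) * (1-ε)^(N-m)) * (ε * (1-ε)))
        + ((1-δ)/δ + Tt N m ε) * (((N:ℝ)+1) * ε - m) := by
    unfold Wf
    rw [show (1 - ε) ^ (N + 1 - m) = (1 - ε) ^ (N - m) * (1 - ε) by rw [← pow_succ]; congr 1; omega,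
      show ε ^ m = ε ^ (m - 1) * ε by rw [← pow_succ]; congr 1; omega]
    ring
  rw [eqpsi, eqK, eqW]
  have hC : ((N.choose m : ℝ)) ≠ 0 := (choose_pos_real hm).ne'
  have hε0 : ε ≠ 0 := ne_of_gt hε.1
  have h1ε : (1:ℝ) - ε ≠ 0 := ne_of_gt (by linarith [hε.2] : (0:ℝ) < 1 - ε)
  have hA : ε^(m-1) ≠ 0 := pow_ne_zero _ hε0
  have hB : (1-ε)^(N-m) ≠ 0 := pow_ne_zero _ h1ε
  field_simp
  ring

lemma shape_Vf {N m : ℕ} {δ : ℝ} (h1 : 1 ≤ m) (hm : m ≤ N) (hδ0 : 0 < δ) (hδ1 : δ < 1) :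
    ∃ c ∈ Set.Ioo (0:ℝ) 1,
      StrictAntiOn (Vf N m δ) (Set.Ioc 0 c) ∧ StrictMonoOn (Vf N m δ) (Set.Ico c 1) := by
  set D : ℝ := (1 - δ) / δ with hD
  have hDpos : 0 < D := div_pos (by linarith) hδ0
  have hWd : ∀ ε : ℝ, HasDerivAt (Wf N m D) (((N : ℝ) + 1) * (D + Tt N m ε)) ε :=
    fun ε => hasDerivAt_Wf h1 hm D ε
  have hWcont : Continuous (Wf N m D) := by
    rw [continuous_iff_continuousAt]; exact fun x => (hWd x).continuousAt
  have hWmono : StrictMonoOn (Wf N m D) (Set.Icc 0 1) := by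
    apply strictMonoOn_of_deriv_pos (convex_Icc 0 1) hWcont.continuousOn
    intro x hx
    rw [interior_Icc] at hx
    rw [(hWd x).deriv]
    have hT : 0 ≤ Tt N m x := Tt_nonneg hx.1.le hx.2.le
    positivity
  have hW0 : Wf N m D 0 = -(D * m) := by
    unfold Wf
    rw [Tt_zero h1, zero_pow (by omega : m ≠ 0)]
    ring
  have hW1 : Wf N m D 1 = (D + 1) * ((N : ℝ) + 1 - m) := by
    unfold Wf
    rw [Tt_one hm, show (1:ℝ) - 1 = 0 by ring, zero_pow (by omega : N + 1 - m ≠ 0)]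
    ring
  have hmem : (0:ℝ) ∈ Set.Ioo (Wf N m D 0) (Wf N m D 1) := by
    rw [hW0, hW1]
    constructor
    · have : (0:ℝ) < D * m := by
        have : (0:ℝ) < (m:ℝ) := by exact_mod_cast h1
        positivity
      linarith
    · have h2 : (0:ℝ) < (N:ℝ) + 1 - m := by
        have : (m:ℝ) ≤ N := by exact_mod_cast hm
        linarith
      positivity
  obtain ⟨c, hc, hWc⟩ := intermediate_value_Ioo (le_of_lt zero_lt_one) hWcont.continuousOn hmem
  refine ⟨c, hc, ?_, ?_⟩
  · apply strictAntiOn_of_deriv_neg (convex_Ioc 0 c)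
    · exact (contOn_Vf hm hδ0).mono (fun x hx => ⟨hx.1, lt_of_le_of_lt hx.2 hc.2⟩)
    · intro x hx
      rw [interior_Ioc] at hx
      have hxI : x ∈ Set.Ioo (0:ℝ) 1 := ⟨hx.1, lt_trans hx.2 hc.2⟩
      rw [(hasDerivAt_Vf h1 hm hδ0 hxI).deriv]
      have hWx : Wf N m D x < 0 := by
        rw [← hWc]
        exact hWmono (Set.mem_Icc.mpr ⟨hxI.1.le, hxI.2.le⟩)
          (Set.mem_Icc.mpr ⟨hc.1.le, hc.2.le⟩) hx.2
      have hpos : (0:ℝ) < (N.choose m : ℝ) * (x ^ (m-1) * (1-x) ^ (N-m)) := by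
        have := choose_pos_real hm
        have h1x : (0:ℝ) < 1 - x := by linarith [hxI.2]
        have h0x := hxI.1
        positivity
      have hNum := NumF_pos hm hxI
      apply div_neg_of_neg_of_pos
      · exact mul_neg_of_pos_of_neg hpos hWx
      · positivity
  · apply strictMonoOn_of_deriv_pos (convex_Ico c 1)
    · exact (contOn_Vf hm hδ0).mono (fun x hx => ⟨lt_of_lt_of_le hc.1 hx.1, hx.2⟩)
    · intro x hx
      rw [interior_Ico] at hx
      have hxI : x ∈ Set.Ioo (0:ℝ) 1 := ⟨lt_trans hc.1 hx.1, hx.2⟩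
      rw [(hasDerivAt_Vf h1 hm hδ0 hxI).deriv]
      have hWx : 0 < Wf N m D x := by
        rw [← hWc]
        exact hWmono (Set.mem_Icc.mpr ⟨hc.1.le, hc.2.le⟩)
          (Set.mem_Icc.mpr ⟨hxI.1.le, hxI.2.le⟩) hx.1
      have hpos : (0:ℝ) < (N.choose m : ℝ) * (x ^ (m-1) * (1-x) ^ (N-m)) := by
        have := choose_pos_real hm
        have h1x : (0:ℝ) < 1 - x := by linarith [hxI.2]
        have h0x := hxI.1
        positivity
      have hNum := NumF_pos hm hxI
      positivity

lemma mono_Vf0 {N : ℕ} {δ : ℝ} (hδ0 : 0 < δ) :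
    StrictMonoOn (Vf N 0 δ) (Set.Ioo 0 1) := by
  have hVeq : ∀ ε : ℝ, Vf N 0 δ ε = 1 / (δ * (1 - ε) ^ (N + 1)) := by
    intro ε
    unfold Vf Snum NumF
    simp [Nat.choose_zero_right]
  intro x hx y hy hxy
  rw [hVeq x, hVeq y]
  have h1y : (0:ℝ) < 1 - y := by linarith [hy.2]
  have hyx : (1:ℝ) - y < 1 - x := by linarith
  have hpy : (0:ℝ) < (1 - y) ^ (N + 1) := by positivity
  have hpp : (1 - y) ^ (N + 1) < (1 - x) ^ (N + 1) :=
    pow_lt_pow_left₀ hyx h1y.le (by omega)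
  apply one_div_lt_one_div_of_lt
  · positivity
  · exact (mul_lt_mul_iff_right₀ hδ0).mpr hpp

lemma open_convex_interval {B : Set ℝ} {a b : ℝ} (hopen : IsOpen B) (hne : B.Nonempty)
    (hsub : B ⊆ Set.Ioo a b)
    (hconv : ∀ x ∈ B, ∀ z ∈ B, ∀ y : ℝ, x < y → y < z → y ∈ B) :
    sInf B < sSup B ∧ B = Set.Ioo (sInf B) (sSup B) := by
  have hbdd_b : BddBelow B := ⟨a, fun x hx => (hsub hx).1.le⟩
  have hbdd_a : BddAbove B := ⟨b, fun x hx => (hsub hx).2.le⟩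
  have key : ∀ x ∈ B, sInf B < x ∧ x < sSup B := by
    intro x hx
    obtain ⟨r, hr, hball⟩ := Metric.isOpen_iff.mp hopen x hx
    have hmem1 : x - r / 2 ∈ B := by
      apply hball
      rw [Metric.mem_ball, Real.dist_eq]
      rw [abs_of_nonpos (by linarith)]
      linarith
    have hmem2 : x + r / 2 ∈ B := by
      apply hball
      rw [Metric.mem_ball, Real.dist_eq]
      rw [abs_of_nonneg (by linarith)]
      linarith
    constructor
    · exact lt_of_le_of_lt (csInf_le hbdd_b hmem1) (by linarith)
    · exact lt_of_lt_of_le (by linarith : x < x + r / 2) (le_csSup hbdd_a hmem2)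
  constructor
  · obtain ⟨x, hx⟩ := hne
    exact lt_trans (key x hx).1 (key x hx).2
  · ext y
    constructor
    · intro hy
      exact Set.mem_Ioo.mpr (key y hy)
    · intro hy
      obtain ⟨x, hxB, hxy⟩ := exists_lt_of_csInf_lt hne hy.1
      obtain ⟨z, hzB, hyz⟩ := exists_lt_of_lt_csSup hne hy.2
      exact hconv x hxB z hzB y hxy hyz

lemma value_at_right {V : ℝ → ℝ} {lo hi c : ℝ} (h : lo < hi) (hc : ContinuousAt V hi)
    (hlt : ∀ x ∈ Set.Ioo lo hi, V x < c) (hge : c ≤ V hi) : V hi = c := by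
  refine le_antisymm ?_ hge
  have ht : Filter.Tendsto V (nhdsWithin hi (Set.Iio hi)) (nhds (V hi)) :=
    hc.continuousWithinAt.tendsto
  refine le_of_tendsto ht ?_
  filter_upwards [Ioo_mem_nhdsLT_of_mem (Set.mem_Ioc.mpr ⟨h, le_refl hi⟩)] with x hx
  exact (hlt x hx).le

lemma value_at_left {V : ℝ → ℝ} {lo hi c : ℝ} (h : lo < hi) (hc : ContinuousAt V lo)
    (hlt : ∀ x ∈ Set.Ioo lo hi, V x < c) (hge : c ≤ V lo) : V lo = c := by
  refine le_antisymm ?_ hge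
  have ht : Filter.Tendsto V (nhdsWithin lo (Set.Ioi lo)) (nhds (V lo)) :=
    hc.continuousWithinAt.tendsto
  refine le_of_tendsto ht ?_
  filter_upwards [Ioo_mem_nhdsGT_of_mem (Set.mem_Ico.mpr ⟨le_refl lo, h⟩)] with x hx
  exact (hlt x hx).le

lemma choose_logconcave {N m q : ℕ} (hmq : m ≤ q) :
    N.choose (q + 1) * N.choose m ≤ N.choose q * N.choose (m + 1) := by
  rcases le_or_gt (q + 1) N with hq | hq
  · have h1 : N.choose (q + 1) * (q + 1) = N.choose q * (N - q) := Nat.choose_succ_right_eq N q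
    have h2 : N.choose (m + 1) * (m + 1) = N.choose m * (N - m) := Nat.choose_succ_right_eq N m
    have hkey : (N - q) * (m + 1) ≤ (q + 1) * (N - m) := by
      calc (N - q) * (m + 1) ≤ (N - m) * (q + 1) :=
            Nat.mul_le_mul (Nat.sub_le_sub_left hmq N) (by omega)
        _ = (q + 1) * (N - m) := Nat.mul_comm _ _
    have hpos : 0 < (q + 1) * (m + 1) := by positivity
    refine Nat.le_of_mul_le_mul_right ?_ hpos
    calc N.choose (q + 1) * N.choose m * ((q + 1) * (m + 1))
          = (N.choose (q + 1) * (q + 1)) * (N.choose m * (m + 1)) := by ring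
        _ = (N.choose q * (N - q)) * (N.choose m * (m + 1)) := by rw [h1]
        _ = N.choose q * N.choose m * ((N - q) * (m + 1)) := by ring
        _ ≤ N.choose q * N.choose m * ((q + 1) * (N - m)) :=
            Nat.mul_le_mul_left _ hkey
        _ = (N.choose q * (q + 1)) * (N.choose m * (N - m)) := by ring
        _ = (N.choose q * (q + 1)) * (N.choose (m + 1) * (m + 1)) := by rw [h2]
        _ = N.choose q * N.choose (m + 1) * ((q + 1) * (m + 1)) := by ring
  · rw [Nat.choose_eq_zero_of_lt hq]
    simp

lemma choose_ratio_pow {N m : ℕ} : ∀ q, m ≤ q →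
    N.choose q * (N.choose m) ^ (q - m) ≤ N.choose m * (N.choose (m + 1)) ^ (q - m) := by
  intro q
  induction q with
  | zero => intro h; interval_cases m; simp
  | succ q ih =>
    intro hq
    rcases Nat.lt_or_ge m (q + 1) with hlt | hge
    · have hmq : m ≤ q := by omega
      have h1 := ih hmq
      have h2 := choose_logconcave (N := N) hmq
      rw [show q + 1 - m = (q - m) + 1 by omega, pow_succ, pow_succ]
      calc N.choose (q + 1) * ((N.choose m) ^ (q - m) * N.choose m)
          = (N.choose (q + 1) * N.choose m) * (N.choose m) ^ (q - m) := by ring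
        _ ≤ (N.choose q * N.choose (m + 1)) * (N.choose m) ^ (q - m) :=
            Nat.mul_le_mul_right _ h2
        _ = (N.choose q * (N.choose m) ^ (q - m)) * N.choose (m + 1) := by ring
        _ ≤ (N.choose m * (N.choose (m + 1)) ^ (q - m)) * N.choose (m + 1) :=
            Nat.mul_le_mul_right _ h1
        _ = N.choose m * ((N.choose (m + 1)) ^ (q - m) * N.choose (m + 1)) := by ring
    · have : m = q + 1 := by omega
      subst this
      simp
lemma choose_le_two_pow {N q : ℕ} : N.choose q ≤ 2 ^ N := by
  rcases le_or_gt q N with h | h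
  · calc N.choose q ≤ ∑ i ∈ range (N + 1), N.choose i :=
        Finset.single_le_sum (f := fun i => N.choose i) (fun i _ => Nat.zero_le _)
          (Finset.mem_range.mpr (by omega))
      _ = 2 ^ N := Nat.sum_range_choose N
  · rw [Nat.choose_eq_zero_of_lt h]; exact Nat.zero_le _

lemma tT_lt_NumF {N m : ℕ} {t x : ℝ} (hm1 : m + 1 ≤ N) (ht0 : 0 < t)
    (hx0 : 0 < x) (hx1 : x < 1)
    (hxe : x * ((N.choose m : ℝ) + N.choose (m + 1)) ≤ (N.choose m : ℝ) * (1 - t)) :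
    t * Tt N m x < NumF N m x := by
  set Cm : ℝ := (N.choose m : ℝ) with hCm
  set Cm1 : ℝ := (N.choose (m + 1) : ℝ) with hCm1
  have hCmpos : 0 < Cm := choose_pos_real (by omega)
  have hCm1pos : 0 < Cm1 := choose_pos_real hm1
  have h1x : (0:ℝ) < 1 - x := by linarith
  set J : ℕ := N - m with hJ
  have hJ1 : N + 1 - m = J + 1 := by omega
  set E : ℝ := Cm * (1 - x) - Cm1 * x with hE
  have hEt : Cm * t ≤ E := by rw [hE]; nlinarith [hxe]
  have hEpos : 0 < E := lt_of_lt_of_le (by positivity) hEt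
  set A : ℕ → ℝ := fun i => Cm1 ^ i * Cm ^ (J + 1 - i) * x ^ (m + i) * (1 - x) ^ (J + 1 - i)
    with hA
  -- step A: termwise bound
  have stepA : Cm ^ J * Tt N m x
      ≤ ∑ q ∈ Icc m N, Cm ^ (J - (q - m)) * Cm * Cm1 ^ (q - m) * (x ^ q * (1 - x) ^ (N - q)) := by
    unfold Tt
    rw [Finset.mul_sum]
    apply Finset.sum_le_sum
    intro q hq
    obtain ⟨hqm, hqN⟩ := Finset.mem_Icc.mp hq
    unfold psi
    have hcast : ((N.choose q : ℝ)) * Cm ^ (q - m) ≤ Cm * Cm1 ^ (q - m) := by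
      have h := choose_ratio_pow (N := N) q hqm
      rw [hCm, hCm1]
      exact_mod_cast h
    have hmono : (0:ℝ) ≤ x ^ q * (1 - x) ^ (N - q) := by positivity
    have hfac : (0:ℝ) ≤ Cm ^ (J - (q - m)) := by positivity
    have hpowsplit : Cm ^ J = Cm ^ (J - (q - m)) * Cm ^ (q - m) := by
      rw [← pow_add]; congr 1; omega
    calc Cm ^ J * ((N.choose q : ℝ) * x ^ q * (1 - x) ^ (N - q))
        = (Cm ^ (J - (q - m)) * ((N.choose q : ℝ) * Cm ^ (q - m))) * (x ^ q * (1 - x) ^ (N - q)) := by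
          rw [hpowsplit]; ring
      _ ≤ (Cm ^ (J - (q - m)) * (Cm * Cm1 ^ (q - m))) * (x ^ q * (1 - x) ^ (N - q)) := by
          apply mul_le_mul_of_nonneg_right _ hmono
          exact mul_le_mul_of_nonneg_left hcast hfac
      _ = Cm ^ (J - (q - m)) * Cm * Cm1 ^ (q - m) * (x ^ q * (1 - x) ^ (N - q)) := by ring
  -- step B/C: telescoping identity
  have stepC : E * ∑ q ∈ Icc m N, Cm ^ (J - (q - m)) * Cm * Cm1 ^ (q - m) * (x ^ q * (1 - x) ^ (N - q))
      = Cm * (A 0 - A (J + 1)) := by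
    rw [show Icc m N = Ico m (N + 1) by rw [Finset.Ico_add_one_right_eq_Icc], Finset.sum_Ico_eq_sum_range,
      show N + 1 - m = J + 1 by omega, Finset.mul_sum]
    rw [show Cm * (A 0 - A (J + 1)) = Cm * ∑ i ∈ range (J + 1), (A i - A (i + 1)) by
      rw [Finset.sum_range_sub' A (J + 1)], Finset.mul_sum]
    apply Finset.sum_congr rfl
    intro i hi
    have hiJ : i ≤ J := by
      have := Finset.mem_range.mp hi; omega
    rw [show m + i - m = i by omega, show N - (m + i) = J - i by omega]
    rw [hA]
    simp only
    rw [show Cm1 ^ (i + 1) = Cm1 ^ i * Cm1 by rw [pow_succ],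
      show x ^ (m + (i + 1)) = x ^ (m + i) * x by rw [show m + (i + 1) = (m + i) + 1 by omega, pow_succ],
      show Cm ^ (J + 1 - i) = Cm ^ (J - i) * Cm by rw [← pow_succ]; congr 1; omega,
      show (1 - x) ^ (J + 1 - i) = (1 - x) ^ (J - i) * (1 - x) by rw [← pow_succ]; congr 1; omega,
      show J + 1 - (i + 1) = J - i by omega]
    rw [hE]
    ring
  have hA0 : A 0 = Cm ^ (J + 1) * (x ^ m * (1 - x) ^ (J + 1)) := by
    rw [hA]; simp only [pow_zero, Nat.sub_zero, Nat.add_zero]; ring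
  have hAtop : 0 < A (J + 1) := by
    rw [hA]
    simp only [Nat.sub_self]
    have : (0:ℝ) < Cm1 ^ (J + 1) := by positivity
    rw [pow_zero, pow_zero]
    have hx' : (0:ℝ) < x ^ (m + (J + 1)) := by positivity
    nlinarith
  -- combine
  have hmain : E * (Cm ^ J * Tt N m x) < Cm * A 0 := by
    calc E * (Cm ^ J * Tt N m x)
        ≤ E * ∑ q ∈ Icc m N, Cm ^ (J - (q - m)) * Cm * Cm1 ^ (q - m) * (x ^ q * (1 - x) ^ (N - q)) :=
          mul_le_mul_of_nonneg_left stepA hEpos.le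
      _ = Cm * (A 0 - A (J + 1)) := stepC
      _ < Cm * A 0 := by nlinarith
  rw [hA0] at hmain
  have hTn : 0 ≤ Tt N m x := Tt_nonneg hx0.le hx1.le
  have h3 : Cm * t * (Cm ^ J * Tt N m x) ≤ E * (Cm ^ J * Tt N m x) :=
    mul_le_mul_of_nonneg_right hEt (mul_nonneg (pow_nonneg hCmpos.le J) hTn)
  have hmain2 : Cm * t * (Cm ^ J * Tt N m x)
      < Cm * (Cm ^ (J + 1) * (x ^ m * (1 - x) ^ (J + 1))) := lt_of_le_of_lt h3 hmain
  have hNum : NumF N m x = Cm * x ^ m * (1 - x) ^ (J + 1) := by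
    unfold NumF; rw [hJ1]
  rw [hNum]
  have hCC : Cm ^ (J + 1) = Cm ^ J * Cm := pow_succ Cm J
  rw [hCC] at hmain2
  have hP : (0:ℝ) < Cm ^ J * Cm := by positivity
  have h2 : (t * Tt N m x) * (Cm ^ J * Cm) < (Cm * x ^ m * (1 - x) ^ (J + 1)) * (Cm ^ J * Cm) := by
    linear_combination hmain2
  exact lt_of_mul_lt_mul_right h2 hP.le

def BV (N m : ℕ) (δ t : ℝ) : Set ℝ :=
  {ε | ε ∈ Set.Ioo (0:ℝ) 1 ∧ t * ((1 - δ) + δ * Tt N m ε) < δ * NumF N m ε}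

lemma cross_iff_Vf {N m : ℕ} {δ t ε : ℝ} (hm : m ≤ N) (ht0 : 0 < t) (hδ0 : 0 < δ)
    (hε : ε ∈ Set.Ioo (0:ℝ) 1) :
    (t * ((1 - δ) + δ * Tt N m ε) < δ * NumF N m ε) ↔ Vf N m δ ε < 1 / t := by
  have hNum := NumF_pos hm hε
  have hB : 0 < δ * NumF N m ε := mul_pos hδ0 hNum
  rw [show Vf N m δ ε = ((1 - δ) + δ * Tt N m ε) / (δ * NumF N m ε) by
    rw [Vf_eq hm]]
  rw [div_lt_div_iff₀ hB ht0]
  constructor <;> intro h <;> linarith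

lemma Vf_boundary {N m : ℕ} {δ t x : ℝ} (hm : m ≤ N) (ht0 : 0 < t) (hδ0 : 0 < δ)
    (hx : x ∈ Set.Ioo (0:ℝ) 1) (heq : Vf N m δ x = 1 / t) :
    t * ((1 - δ) + δ * Tt N m x) = δ * NumF N m x := by
  have hNum := NumF_pos hm hx
  have hB : δ * NumF N m x ≠ 0 := (mul_pos hδ0 hNum).ne'
  rw [show Vf N m δ x = ((1 - δ) + δ * Tt N m x) / (δ * NumF N m x) by rw [Vf_eq hm]] at heq
  rw [div_eq_div_iff hB (ne_of_gt ht0)] at heq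
  linarith

lemma BV_open {N m : ℕ} {δ t : ℝ} (hm : m ≤ N) (ht0 : 0 < t) (hδ0 : 0 < δ) :
    IsOpen (BV N m δ t) := by
  have : BV N m δ t = Set.Ioo (0:ℝ) 1 ∩ (Vf N m δ) ⁻¹' (Set.Iio (1 / t)) := by
    ext x
    constructor
    · rintro ⟨hx, hlt⟩
      exact ⟨hx, (cross_iff_Vf hm ht0 hδ0 hx).mp hlt⟩
    · rintro ⟨hx, hlt⟩
      exact ⟨hx, (cross_iff_Vf hm ht0 hδ0 hx).mpr hlt⟩
  rw [this]
  exact (contOn_Vf hm hδ0).isOpen_inter_preimage isOpen_Ioo isOpen_Iio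

lemma BV_convex {N m : ℕ} {δ t : ℝ} (hN : 1 ≤ N) (hm : m ≤ N) (ht0 : 0 < t)
    (hδ0 : 0 < δ) (hδ1 : δ < 1) :
    ∀ x ∈ BV N m δ t, ∀ z ∈ BV N m δ t, ∀ y : ℝ, x < y → y < z → y ∈ BV N m δ t := by
  intro x hx z hz y hxy hyz
  have hyI : y ∈ Set.Ioo (0:ℝ) 1 := ⟨lt_trans hx.1.1 hxy, lt_trans hyz hz.1.2⟩
  have hVx : Vf N m δ x < 1 / t := (cross_iff_Vf hm ht0 hδ0 hx.1).mp hx.2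
  have hVz : Vf N m δ z < 1 / t := (cross_iff_Vf hm ht0 hδ0 hz.1).mp hz.2
  refine ⟨hyI, (cross_iff_Vf hm ht0 hδ0 hyI).mpr ?_⟩
  rcases Nat.eq_zero_or_pos m with hm0 | hm1
  · subst hm0
    exact lt_trans (mono_Vf0 hδ0 hyI hz.1 hyz) hVz
  · obtain ⟨c, hc, hanti, hmono⟩ := shape_Vf hm1 hm hδ0 hδ1
    rcases le_or_gt y c with hyc | hcy
    · have : Vf N m δ y < Vf N m δ x :=
        hanti (Set.mem_Ioc.mpr ⟨hx.1.1, le_of_lt (lt_of_lt_of_le hxy hyc)⟩)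
          (Set.mem_Ioc.mpr ⟨hyI.1, hyc⟩) hxy
      linarith
    · have : Vf N m δ y < Vf N m δ z :=
        hmono (Set.mem_Ico.mpr ⟨hcy.le, hyI.2⟩)
          (Set.mem_Ico.mpr ⟨le_of_lt (lt_trans hcy hyz), hz.1.2⟩) hyz
      linarith

lemma BV_lo_bound {N m : ℕ} {δ t : ℝ} (h1 : 1 ≤ m) (hm : m ≤ N) (ht0 : 0 < t)
    (hδ0 : 0 < δ) (hδ1 : δ < 1) :
    ∀ x ∈ BV N m δ t, t * (1 - δ) / (δ * N.choose m) < x := by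
  intro x hx
  obtain ⟨hxI, hlt⟩ := hx
  have hC : (0:ℝ) < N.choose m := choose_pos_real hm
  have hT : 0 ≤ Tt N m x := Tt_nonneg hxI.1.le hxI.2.le
  have hNum : NumF N m x ≤ (N.choose m : ℝ) * x := by
    unfold NumF
    have h1x : (0:ℝ) ≤ 1 - x := by linarith [hxI.2]
    have hxm : x ^ m ≤ x := by
      calc x ^ m ≤ x ^ 1 := pow_le_pow_of_le_one hxI.1.le hxI.2.le h1
        _ = x := pow_one x
    have hp : (1 - x) ^ (N + 1 - m) ≤ 1 := pow_le_one₀ h1x (by linarith [hxI.1])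
    calc (N.choose m : ℝ) * x ^ m * (1 - x) ^ (N + 1 - m)
        ≤ (N.choose m : ℝ) * x ^ m * 1 :=
          mul_le_mul_of_nonneg_left hp (mul_nonneg hC.le (pow_nonneg hxI.1.le m))
      _ = (N.choose m : ℝ) * x ^ m := by ring
      _ ≤ (N.choose m : ℝ) * x := by
          exact mul_le_mul_of_nonneg_left hxm hC.le
  have key : t * (1 - δ) < δ * ((N.choose m : ℝ) * x) := by
    calc t * (1 - δ) ≤ t * ((1 - δ) + δ * Tt N m x) := by
          nlinarith [mul_nonneg (mul_nonneg ht0.le hδ0.le) hT]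
      _ < δ * NumF N m x := hlt
      _ ≤ δ * ((N.choose m : ℝ) * x) := by
          exact mul_le_mul_of_nonneg_left hNum hδ0.le
  rw [div_lt_iff₀ (by positivity)]
  linarith [key]

lemma BV_hi_bound {N m : ℕ} {δ t : ℝ} (hm : m ≤ N) (ht0 : 0 < t)
    (hδ0 : 0 < δ) (hδ1 : δ < 1) :
    ∀ x ∈ BV N m δ t, x < 1 - t * (1 - δ) / (δ * N.choose m) := by
  intro x hx
  obtain ⟨hxI, hlt⟩ := hx
  have hC : (0:ℝ) < N.choose m := choose_pos_real hm
  have hT : 0 ≤ Tt N m x := Tt_nonneg hxI.1.le hxI.2.le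
  have hNum : NumF N m x ≤ (N.choose m : ℝ) * (1 - x) := by
    unfold NumF
    have h1x : (0:ℝ) ≤ 1 - x := by linarith [hxI.2]
    have hxm : x ^ m ≤ 1 := pow_le_one₀ hxI.1.le hxI.2.le
    have hp : (1 - x) ^ (N + 1 - m) ≤ (1 - x) := by
      calc (1 - x) ^ (N + 1 - m) ≤ (1 - x) ^ 1 :=
          pow_le_pow_of_le_one h1x (by linarith [hxI.1]) (by omega)
        _ = 1 - x := pow_one _
    calc (N.choose m : ℝ) * x ^ m * (1 - x) ^ (N + 1 - m)
        ≤ (N.choose m : ℝ) * 1 * (1 - x) ^ (N + 1 - m) := by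
          apply mul_le_mul_of_nonneg_right _ (by positivity)
          exact mul_le_mul_of_nonneg_left hxm hC.le
      _ = (N.choose m : ℝ) * (1 - x) ^ (N + 1 - m) := by ring
      _ ≤ (N.choose m : ℝ) * (1 - x) := mul_le_mul_of_nonneg_left hp hC.le
  have key : t * (1 - δ) < δ * ((N.choose m : ℝ) * (1 - x)) := by
    calc t * (1 - δ) ≤ t * ((1 - δ) + δ * Tt N m x) := by
          nlinarith [mul_nonneg (mul_nonneg ht0.le hδ0.le) hT]
      _ < δ * NumF N m x := hlt
      _ ≤ δ * ((N.choose m : ℝ) * (1 - x)) := mul_le_mul_of_nonneg_left hNum hδ0.le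
  have : t * (1 - δ) / (δ * N.choose m) < 1 - x := by
    rw [div_lt_iff₀ (by positivity)]
    linarith [key]
  linarith

lemma mem_BV_of_gap {N m : ℕ} {δ t x : ℝ} (ht0 : 0 < t) (hδ0 : 0 < δ)
    (hx : x ∈ Set.Ioo (0:ℝ) 1)
    (hgap : (1 - δ) / δ < (NumF N m x - t * Tt N m x) / t) :
    x ∈ BV N m δ t := by
  refine ⟨hx, ?_⟩
  rw [div_lt_div_iff₀ hδ0 ht0] at hgap
  nlinarith [hgap]

lemma Num_split {N m : ℕ} (hm1 : m + 1 ≤ N) (x : ℝ) :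
    NumF N m x = (x ^ m * (1 - x) ^ (N - m)) * ((N.choose m : ℝ) * (1 - x)) ∧
    NumF N (m + 1) x = (x ^ m * (1 - x) ^ (N - m)) * ((N.choose (m + 1) : ℝ) * x) ∧
    psi N m x = (x ^ m * (1 - x) ^ (N - m)) * (N.choose m : ℝ) := by
  refine ⟨?_, ?_, ?_⟩
  · unfold NumF
    rw [show (1 - x) ^ (N + 1 - m) = (1 - x) ^ (N - m) * (1 - x) by
      rw [← pow_succ]; congr 1; omega]
    ring
  · unfold NumF
    rw [show N + 1 - (m + 1) = N - m by omega,
      show x ^ (m + 1) = x ^ m * x by rw [pow_succ]]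
    ring
  · unfold psi; ring

lemma Delta_iff {n k : ℕ} {δ t ε : ℝ} (hn : 3 ≤ n) (hk1 : 1 ≤ k) (hk2 : k ≤ n - 1)
    (hδ0 : 0 < δ) (hδ1 : δ < 1) (hε : ε ∈ Set.Ioo (0:ℝ) 1) :
    (Delta n k ε δ > t) ↔
      t * ((1 - δ) + δ * Tt (n - 1) (n - 1 - k) ε) < δ * NumF (n - 1) (n - 1 - k) ε := by
  unfold Delta
  rw [show n - k - 1 = n - 1 - k by omega]
  set N := n - 1 with hNdef
  set m := n - 1 - k with hmdef
  have hm : m ≤ N := by omega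
  have hsum : (∑ q ∈ range m, psi N q ε) = Snum N m ε := rfl
  have hT : 0 ≤ Tt N m ε := Tt_nonneg hε.1.le hε.2.le
  have hS : Snum N m ε = 1 - Tt N m ε := by linarith [Snum_add_Tt hm ε]
  have hden : 0 < 1 - δ * Snum N m ε := by
    rw [hS]; nlinarith
  rw [hsum, gt_iff_lt, lt_div_iff₀ hden]
  have e1 : δ * (1 - ε) * psi N m ε = δ * NumF N m ε := by
    rw [← one_sub_mul_psi hm]; ring
  have e2 : t * (1 - δ * Snum N m ε) = t * ((1 - δ) + δ * Tt N m ε) := by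
    rw [hS]; ring
  rw [e1, e2]

set_option maxHeartbeats 2000000 in
/-- Let `t = 1 − n(b−c)/((n−1)b) ∈ (0,1)`.  There exists `δ₀ ∈ (0,1)` such that
for all `δ ∈ (δ₀,1)`: for every `k ∈ {1,…,n−1}` the set
`B_k(δ) = {ε ∈ (0,1) : Δ(ε;k,δ) > t}` is a nonempty open interval
`(ε̲_k, ε̄_k)`, with `0 = ε̲_{n−1} < ε̲_{n−2} < ⋯ < ε̲_1` and
`0 < ε̄_{n−1} < ε̄_{n−2} < ⋯ < ε̄_1 < 1`: both endpoints of the stability band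
strictly increase as tolerance increases (as `k` decreases), and the lower
endpoint is `0` only for the least tolerant strategy `T_{n−1}`. -/
theorem stability_bands_ordered (n : ℕ) (hn : 3 ≤ n) (b c : ℝ)
    (hb0 : 0 < b / n) (hbc : b / n < c) (hcb : c < b) :
    (0 < 1 - n * (b - c) / (((n : ℝ) - 1) * b) ∧
      1 - n * (b - c) / (((n : ℝ) - 1) * b) < 1) ∧
    ∃ δ₀ : ℝ, 0 < δ₀ ∧ δ₀ < 1 ∧
      ∀ δ : ℝ, δ₀ < δ → δ < 1 →
        ∃ εlo εhi : ℕ → ℝ,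
          (∀ k : ℕ, 1 ≤ k → k ≤ n - 1 →
            εlo k < εhi k ∧
            {ε : ℝ | ε ∈ Set.Ioo (0 : ℝ) 1 ∧
                Delta n k ε δ > 1 - n * (b - c) / (((n : ℝ) - 1) * b)} =
              Set.Ioo (εlo k) (εhi k)) ∧
          εlo (n - 1) = 0 ∧
          (∀ k : ℕ, 1 ≤ k → k ≤ n - 2 → εlo (k + 1) < εlo k) ∧
          0 < εhi (n - 1) ∧
          (∀ k : ℕ, 1 ≤ k → k ≤ n - 2 → εhi (k + 1) < εhi k) ∧
          εhi 1 < 1 := by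
  have hn3 : (3:ℝ) ≤ (n:ℝ) := by exact_mod_cast hn
  have hnpos : (0:ℝ) < n := by linarith
  have hb : 0 < b := by
    have := mul_pos hb0 hnpos
    rwa [div_mul_cancel₀ _ (ne_of_gt hnpos)] at this
  have hbc' : b < n * c := by
    rw [div_lt_iff₀ hnpos] at hbc; linarith
  have hden : (0:ℝ) < ((n:ℝ) - 1) * b := by nlinarith
  set t : ℝ := 1 - n * (b - c) / (((n : ℝ) - 1) * b) with htdef
  have ht1 : t < 1 := by
    have hpos : 0 < (n:ℝ) * (b - c) / (((n:ℝ) - 1) * b) := div_pos (by nlinarith) hden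
    rw [htdef]; linarith
  have ht0 : 0 < t := by
    rw [htdef]
    have : (n:ℝ) * (b - c) / (((n:ℝ) - 1) * b) < 1 := by
      rw [div_lt_one hden]; nlinarith
    linarith
  refine ⟨⟨ht0, ht1⟩, ?_⟩
  set N := n - 1 with hNdef
  have hN2 : 2 ≤ N := by omega
  have h2N : (0:ℝ) < 2 ^ N := by positivity
  set p : ℝ := (1 - t) / (1 + 2 ^ N) with hpdef
  have hppos : 0 < p := div_pos (by linarith) (by positivity)
  have hplt : p < 1 := by
    rw [hpdef, div_lt_one (by positivity)]
    linarith
  set pst : ℕ → ℝ :=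
    fun m => (N.choose m : ℝ) * (1 - t) / ((N.choose m : ℝ) + (N.choose (m + 1) : ℝ))
    with hpstdef
  have hpst_facts : ∀ m, m + 1 ≤ N →
      (pst m * ((N.choose m : ℝ) + (N.choose (m + 1) : ℝ)) = (N.choose m : ℝ) * (1 - t)
        ∧ pst m ∈ Set.Ioo (0:ℝ) 1 ∧ p ≤ pst m) := by
    intro m hm1
    have hCm : (0:ℝ) < N.choose m := choose_pos_real (by omega)
    have hCm1 : (0:ℝ) < N.choose (m + 1) := choose_pos_real hm1
    have hdenom : (0:ℝ) < (N.choose m : ℝ) + N.choose (m + 1) := by linarith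
    refine ⟨?_, ⟨?_, ?_⟩, ?_⟩
    · rw [hpstdef]; field_simp
    · rw [hpstdef]
      exact div_pos (mul_pos hCm (by linarith)) hdenom
    · rw [hpstdef, div_lt_one hdenom]
      nlinarith [mul_pos hCm ht0]
    · rw [hpdef, hpstdef, div_le_div_iff₀ (by positivity) hdenom]
      have hC1le : (N.choose (m + 1) : ℝ) ≤ 2 ^ N := by
        exact_mod_cast choose_le_two_pow (N := N) (q := m + 1)
      have hCm1' : (1:ℝ) ≤ N.choose m := by
        exact_mod_cast Nat.choose_pos (show m ≤ N by omega)
      have h1 : (N.choose m : ℝ) + N.choose (m + 1) ≤ (N.choose m : ℝ) * (1 + 2 ^ N) := by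
        nlinarith
      nlinarith [mul_le_mul_of_nonneg_left h1 (show (0:ℝ) ≤ 1 - t by linarith)]
  set g : ℕ → ℝ := fun m => min ((NumF N m p - t * Tt N m p) / t)
      ((NumF N m (pst m) - t * Tt N m (pst m)) / t) with hgdef
  have hIcc_ne : (Finset.Icc 0 (N - 1)).Nonempty :=
    ⟨0, Finset.mem_Icc.mpr ⟨le_refl 0, Nat.zero_le _⟩⟩
  set γ : ℝ := (Finset.Icc 0 (N - 1)).inf' hIcc_ne g with hγdef
  have hγpos : 0 < γ := by
    rw [hγdef, Finset.lt_inf'_iff]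
    intro m hm
    have hm1 : m + 1 ≤ N := by
      have := (Finset.mem_Icc.mp hm).2; omega
    obtain ⟨hpsteq, hpst01, hple⟩ := hpst_facts m hm1
    have hCm : (0:ℝ) < N.choose m := choose_pos_real (by omega)
    have hCm1 : (0:ℝ) < N.choose (m + 1) := choose_pos_real hm1
    have hdenom : (0:ℝ) < (N.choose m : ℝ) + N.choose (m + 1) := by linarith
    refine lt_min ?_ ?_
    · refine div_pos (sub_pos.mpr (tT_lt_NumF hm1 ht0 hppos hplt ?_)) ht0
      calc p * ((N.choose m : ℝ) + N.choose (m + 1))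
          ≤ pst m * ((N.choose m : ℝ) + N.choose (m + 1)) :=
            mul_le_mul_of_nonneg_right hple hdenom.le
        _ = (N.choose m : ℝ) * (1 - t) := hpsteq
    · exact div_pos (sub_pos.mpr
        (tT_lt_NumF hm1 ht0 hpst01.1 hpst01.2 (le_of_eq hpsteq))) ht0
  refine ⟨max t (1 / (1 + γ)), lt_of_lt_of_le ht0 (le_max_left _ _), ?_, ?_⟩
  · apply max_lt ht1
    rw [div_lt_one (by linarith)]
    linarith
  intro δ hδlo hδ1
  have hδt : t < δ := lt_of_le_of_lt (le_max_left _ _) hδlo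
  have hδ0 : 0 < δ := lt_trans ht0 hδt
  have hδγ : (1 - δ) / δ < γ := by
    have h1 : 1 / (1 + γ) < δ := lt_of_le_of_lt (le_max_right _ _) hδlo
    rw [div_lt_iff₀ (by linarith : (0:ℝ) < 1 + γ)] at h1
    rw [div_lt_iff₀ hδ0]
    nlinarith
  have hband : ∀ m, m ≤ N - 1 →
      BV N m δ t = Set.Ioo (sInf (BV N m δ t)) (sSup (BV N m δ t))
      ∧ sInf (BV N m δ t) < sSup (BV N m δ t)
      ∧ p ∈ BV N m δ t ∧ pst m ∈ BV N m δ t := by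
    intro m hm
    have hmN : m ≤ N := by omega
    have hm1 : m + 1 ≤ N := by omega
    have hγle : γ ≤ g m := Finset.inf'_le g (Finset.mem_Icc.mpr ⟨Nat.zero_le m, hm⟩)
    have hp_mem : p ∈ BV N m δ t :=
      mem_BV_of_gap ht0 hδ0 ⟨hppos, hplt⟩
        (lt_of_lt_of_le hδγ (hγle.trans (min_le_left _ _)))
    have hpst_mem : pst m ∈ BV N m δ t :=
      mem_BV_of_gap ht0 hδ0 (hpst_facts m hm1).2.1
        (lt_of_lt_of_le hδγ (hγle.trans (min_le_right _ _)))
    have hiv := open_convex_interval (BV_open hmN ht0 hδ0) ⟨p, hp_mem⟩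
        (fun x hx => hx.1) (BV_convex (by omega) hmN ht0 hδ0 hδ1)
    exact ⟨hiv.2, hiv.1, hp_mem, hpst_mem⟩
  have hlo01 : ∀ m, 1 ≤ m → m ≤ N - 1 → sInf (BV N m δ t) ∈ Set.Ioo (0:ℝ) 1 := by
    intro m h1 hm
    have hmN : m ≤ N := by omega
    obtain ⟨hIoo, hlh, hp_mem, _⟩ := hband m hm
    constructor
    · have hη : 0 < t * (1 - δ) / (δ * N.choose m) :=
        div_pos (mul_pos ht0 (by linarith)) (mul_pos hδ0 (choose_pos_real hmN))
      refine lt_of_lt_of_le hη (le_csInf ⟨p, hp_mem⟩ ?_)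
      intro x hx
      exact (BV_lo_bound h1 hmN ht0 hδ0 hδ1 x hx).le
    · have hpI : p ∈ Set.Ioo (sInf (BV N m δ t)) (sSup (BV N m δ t)) := by
        rw [← hIoo]; exact hp_mem
      exact lt_trans hpI.1 hplt
  have hhi01 : ∀ m, m ≤ N - 1 → sSup (BV N m δ t) ∈ Set.Ioo (0:ℝ) 1 := by
    intro m hm
    have hmN : m ≤ N := by omega
    obtain ⟨hIoo, hlh, hp_mem, _⟩ := hband m hm
    have hpI : p ∈ Set.Ioo (sInf (BV N m δ t)) (sSup (BV N m δ t)) := by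
      rw [← hIoo]; exact hp_mem
    constructor
    · exact lt_trans hppos hpI.2
    · have hη : 0 < t * (1 - δ) / (δ * N.choose m) :=
        div_pos (mul_pos ht0 (by linarith)) (mul_pos hδ0 (choose_pos_real hmN))
      have hub : sSup (BV N m δ t) ≤ 1 - t * (1 - δ) / (δ * N.choose m) :=
        csSup_le ⟨p, hp_mem⟩ (fun x hx => (BV_hi_bound hmN ht0 hδ0 hδ1 x hx).le)
      linarith
  have hVhi : ∀ m, m ≤ N - 1 → Vf N m δ (sSup (BV N m δ t)) = 1 / t := by
    intro m hm
    have hmN : m ≤ N := by omega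
    obtain ⟨hIoo, hlh, hp_mem, _⟩ := hband m hm
    have hx01 := hhi01 m hm
    apply value_at_right hlh
    · exact (contOn_Vf hmN hδ0).continuousAt (Ioo_mem_nhds hx01.1 hx01.2)
    · intro x hx
      have hxB : x ∈ BV N m δ t := by rw [hIoo]; exact hx
      exact (cross_iff_Vf hmN ht0 hδ0 hxB.1).mp hxB.2
    · by_contra hcon
      push_neg at hcon
      have hmem : sSup (BV N m δ t) ∈ BV N m δ t :=
        ⟨hx01, (cross_iff_Vf hmN ht0 hδ0 hx01).mpr hcon⟩
      have hmem2 := (le_of_eq hIoo) hmem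
      exact lt_irrefl _ hmem2.2
  have hVlo : ∀ m, 1 ≤ m → m ≤ N - 1 → Vf N m δ (sInf (BV N m δ t)) = 1 / t := by
    intro m h1 hm
    have hmN : m ≤ N := by omega
    obtain ⟨hIoo, hlh, hp_mem, _⟩ := hband m hm
    have hx01 := hlo01 m h1 hm
    apply value_at_left hlh
    · exact (contOn_Vf hmN hδ0).continuousAt (Ioo_mem_nhds hx01.1 hx01.2)
    · intro x hx
      have hxB : x ∈ BV N m δ t := by rw [hIoo]; exact hx
      exact (cross_iff_Vf hmN ht0 hδ0 hxB.1).mp hxB.2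
    · by_contra hcon
      push_neg at hcon
      have hmem : sInf (BV N m δ t) ∈ BV N m δ t :=
        ⟨hx01, (cross_iff_Vf hmN ht0 hδ0 hx01).mpr hcon⟩
      have hmem2 := (le_of_eq hIoo) hmem
      exact lt_irrefl _ hmem2.1
  refine ⟨fun k => sInf (BV N (n - 1 - k) δ t), fun k => sSup (BV N (n - 1 - k) δ t),
    ?_, ?_, ?_, ?_, ?_, ?_⟩
  · -- interval property
    intro k hk1 hk2
    have hm : n - 1 - k ≤ N - 1 := by omega
    obtain ⟨hIoo, hlh, _, _⟩ := hband _ hm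
    refine ⟨hlh, ?_⟩
    rw [← hIoo]
    ext ε
    simp only [Set.mem_setOf_eq]
    constructor
    · rintro ⟨hε, hd⟩
      exact ⟨hε, (Delta_iff hn hk1 hk2 hδ0 hδ1 hε).mp hd⟩
    · rintro ⟨hε, hcr⟩
      exact ⟨hε, (Delta_iff hn hk1 hk2 hδ0 hδ1 hε).mpr hcr⟩
  · -- lower endpoint of least tolerant band is 0
    beta_reduce
    rw [show n - 1 - N = 0 by omega]
    have hp_mem := (hband 0 (by omega)).2.2.1
    have hsub0 : Set.Ioo (0:ℝ) p ⊆ BV N 0 δ t := by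
      intro x hx
      have hx01 : x ∈ Set.Ioo (0:ℝ) 1 := ⟨hx.1, lt_trans hx.2 hplt⟩
      refine ⟨hx01, (cross_iff_Vf (by omega) ht0 hδ0 hx01).mpr ?_⟩
      have hVp : Vf N 0 δ p < 1 / t :=
        (cross_iff_Vf (by omega) ht0 hδ0 ⟨hppos, hplt⟩).mp hp_mem.2
      exact lt_trans (mono_Vf0 hδ0 hx01 ⟨hppos, hplt⟩ hx.2) hVp
    have hbb : BddBelow (BV N 0 δ t) := ⟨0, fun x hx => hx.1.1.le⟩
    have h1 : sInf (BV N 0 δ t) ≤ sInf (Set.Ioo (0:ℝ) p) :=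
      csInf_le_csInf hbb (Set.nonempty_Ioo.mpr hppos) hsub0
    rw [csInf_Ioo hppos] at h1
    have h2 : 0 ≤ sInf (BV N 0 δ t) :=
      le_csInf ⟨p, hp_mem⟩ (fun x hx => hx.1.1.le)
    linarith
  · -- lower endpoints strictly ordered
    intro k hk1 hk2
    beta_reduce
    rw [show n - 1 - k = (n - 2 - k) + 1 by omega, show n - 1 - (k + 1) = n - 2 - k by omega]
    set m := n - 2 - k with hm_def
    have hmN1 : m ≤ N - 1 := by omega
    have hm1N : m + 1 ≤ N - 1 := by omega
    have hm1 : m + 1 ≤ N := by omega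
    obtain ⟨hIoo, hlh, hp_mem, hpst_mem⟩ := hband m hmN1
    obtain ⟨hIoo', hlh', hp_mem', _⟩ := hband (m + 1) hm1N
    set x := sInf (BV N (m + 1) δ t) with hxdef
    have hx01 : x ∈ Set.Ioo (0:ℝ) 1 := hlo01 (m + 1) (by omega) hm1N
    have hcross : t * ((1 - δ) + δ * Tt N (m + 1) x) = δ * NumF N (m + 1) x :=
      Vf_boundary (by omega) ht0 hδ0 hx01 (hVlo (m + 1) (by omega) hm1N)
    have hxp : x < p := by
      have hpI : p ∈ Set.Ioo x (sSup (BV N (m + 1) δ t)) := by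
        rw [hxdef, ← hIoo']; exact hp_mem'
      exact hpI.1
    obtain ⟨hpsteq, hpst01, hple⟩ := hpst_facts m hm1
    have hCm : (0:ℝ) < N.choose m := choose_pos_real (by omega)
    have hCm1 : (0:ℝ) < N.choose (m + 1) := choose_pos_real hm1
    have hCsum : (0:ℝ) < (N.choose m : ℝ) + N.choose (m + 1) := by linarith
    have hxlt : x * ((N.choose m : ℝ) + N.choose (m + 1)) < (N.choose m : ℝ) * (1 - t) := by
      calc x * ((N.choose m : ℝ) + N.choose (m + 1))
          < pst m * ((N.choose m : ℝ) + N.choose (m + 1)) :=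
            mul_lt_mul_of_pos_right (lt_of_lt_of_le hxp hple) hCsum
        _ = (N.choose m : ℝ) * (1 - t) := hpsteq
    obtain ⟨e1, e2, e3⟩ := Num_split hm1 x
    have h1x : (0:ℝ) < 1 - x := by linarith [hx01.2]
    have hP : (0:ℝ) < x ^ m * (1 - x) ^ (N - m) := by
      have := hx01.1; positivity
    have hbase : t * (N.choose m : ℝ)
        < (N.choose m : ℝ) * (1 - x) - (N.choose (m + 1) : ℝ) * x := by nlinarith [hxlt]
    have hineq : t * psi N m x < NumF N m x - NumF N (m + 1) x := by
      rw [e1, e2, e3]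
      calc t * ((x ^ m * (1 - x) ^ (N - m)) * (N.choose m : ℝ))
          = (x ^ m * (1 - x) ^ (N - m)) * (t * (N.choose m : ℝ)) := by ring
        _ < (x ^ m * (1 - x) ^ (N - m)) *
              ((N.choose m : ℝ) * (1 - x) - (N.choose (m + 1) : ℝ) * x) :=
            mul_lt_mul_of_pos_left hbase hP
        _ = _ := by ring
    have hpsi := Tt_sub_succ (show m ≤ N by omega) x
    have hd := mul_lt_mul_of_pos_left hineq hδ0
    have hxm : x ∈ BV N m δ t := by
      refine ⟨hx01, ?_⟩
      have hTsub : Tt N m x = Tt N (m + 1) x + psi N m x := by linarith [hpsi]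
      rw [hTsub]
      nlinarith [hcross, hd]
    have hfin : x ∈ Set.Ioo (sInf (BV N m δ t)) (sSup (BV N m δ t)) := by
      rw [← hIoo]; exact hxm
    exact hfin.1
  · -- 0 < top of least tolerant band
    beta_reduce
    rw [show n - 1 - N = 0 by omega]
    obtain ⟨hIoo, hlh, hp_mem, _⟩ := hband 0 (by omega)
    have hpI : p ∈ Set.Ioo (sInf (BV N 0 δ t)) (sSup (BV N 0 δ t)) := by
      rw [← hIoo]; exact hp_mem
    exact lt_trans hppos hpI.2
  · -- upper endpoints strictly ordered
    intro k hk1 hk2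
    beta_reduce
    rw [show n - 1 - k = (n - 2 - k) + 1 by omega, show n - 1 - (k + 1) = n - 2 - k by omega]
    set m := n - 2 - k with hm_def
    have hmN1 : m ≤ N - 1 := by omega
    have hm1N : m + 1 ≤ N - 1 := by omega
    have hm1 : m + 1 ≤ N := by omega
    obtain ⟨hIoo, hlh, hp_mem, hpst_mem⟩ := hband m hmN1
    obtain ⟨hIoo', hlh', _, _⟩ := hband (m + 1) hm1N
    set x := sSup (BV N m δ t) with hxdef
    have hx01 : x ∈ Set.Ioo (0:ℝ) 1 := hhi01 m hmN1
    have hcross : t * ((1 - δ) + δ * Tt N m x) = δ * NumF N m x :=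
      Vf_boundary (by omega) ht0 hδ0 hx01 (hVhi m hmN1)
    obtain ⟨hpsteq, hpst01, hple⟩ := hpst_facts m hm1
    have hCm : (0:ℝ) < N.choose m := choose_pos_real (by omega)
    have hCm1 : (0:ℝ) < N.choose (m + 1) := choose_pos_real hm1
    have hCsum : (0:ℝ) < (N.choose m : ℝ) + N.choose (m + 1) := by linarith
    have hxgt : pst m < x := by
      have hpI : pst m ∈ Set.Ioo (sInf (BV N m δ t)) x := by
        rw [hxdef, ← hIoo]; exact hpst_mem
      exact hpI.2
    have hxgt' : (N.choose m : ℝ) * (1 - t) < x * ((N.choose m : ℝ) + N.choose (m + 1)) := by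
      calc (N.choose m : ℝ) * (1 - t)
          = pst m * ((N.choose m : ℝ) + N.choose (m + 1)) := hpsteq.symm
        _ < x * ((N.choose m : ℝ) + N.choose (m + 1)) :=
            mul_lt_mul_of_pos_right hxgt hCsum
    obtain ⟨e1, e2, e3⟩ := Num_split hm1 x
    have h1x : (0:ℝ) < 1 - x := by linarith [hx01.2]
    have hP : (0:ℝ) < x ^ m * (1 - x) ^ (N - m) := by
      have := hx01.1; positivity
    have hbase : (N.choose m : ℝ) * (1 - x) - (N.choose (m + 1) : ℝ) * x
        < t * (N.choose m : ℝ) := by nlinarith [hxgt']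
    have hineq : NumF N m x - NumF N (m + 1) x < t * psi N m x := by
      rw [e1, e2, e3]
      calc (x ^ m * (1 - x) ^ (N - m)) * ((N.choose m : ℝ) * (1 - x))
            - (x ^ m * (1 - x) ^ (N - m)) * ((N.choose (m + 1) : ℝ) * x)
          = (x ^ m * (1 - x) ^ (N - m)) *
              ((N.choose m : ℝ) * (1 - x) - (N.choose (m + 1) : ℝ) * x) := by ring
        _ < (x ^ m * (1 - x) ^ (N - m)) * (t * (N.choose m : ℝ)) :=
            mul_lt_mul_of_pos_left hbase hP
        _ = t * ((x ^ m * (1 - x) ^ (N - m)) * (N.choose m : ℝ)) := by ring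
    have hpsi := Tt_sub_succ (show m ≤ N by omega) x
    have hd := mul_lt_mul_of_pos_left hineq hδ0
    have hxm : x ∈ BV N (m + 1) δ t := by
      refine ⟨hx01, ?_⟩
      have hTsub : Tt N m x = Tt N (m + 1) x + psi N m x := by linarith [hpsi]
      rw [hTsub] at hcross
      nlinarith [hcross, hd]
    have hfin : x ∈ Set.Ioo (sInf (BV N (m + 1) δ t)) (sSup (BV N (m + 1) δ t)) := by
      rw [← hIoo']; exact hxm
    exact hfin.2
  · -- top band upper endpoint below 1
    beta_reduce
    rw [show n - 1 - 1 = N - 1 by omega]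
    exact (hhi01 (N - 1) (le_refl _)).2
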